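/- Let p be a prime, e | p−1, and G ⊂ GL_2(F_p) be generated by the transvection x_1 ↦ x_1 − x_2 (fixing x_2) and the diagonal map x_2 ↦ ω x_2 with ω of order e. With f_1 = x_1^p − x_1 x_2^{p−1}, f_2 = x_2^e, the three polynomials h_0 = f_2^{1+e^{-1}(p^m−1)}, h_1 = Σ_{k=0}^{m−1} f_2^{1+e^{-1}(p^m − p^{m−k})} f_1^{p^{m−k−1}}, h_2 = f_1^{2p^{m−1}} all lie in the ideal (x_1^{p^m}, x_2^{p^m}) of F_p[x_1, x_2]. -/

import Mathlib

open MvPolynomial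

/-- In `F_p[x_1,x_2]` (variables `X 0, X 1`), with `f_1 = x_1^p − x_1 x_2^{p−1}` and
`f_2 = x_2^e` where `e ∣ p−1`, the three polynomials `h_0, h_1, h_2` lie in the ideal
`(x_1^{p^m}, x_2^{p^m})`. -/
theorem stmt_14 (p m e : ℕ) [Fact p.Prime] (hm : 1 ≤ m) (he0 : 0 < e) (he : e ∣ p - 1)
    (ω : (ZMod p)ˣ) (hω : orderOf ω = e) :
    (((X 1 : MvPolynomial (Fin 2) (ZMod p)) ^ e) ^ (1 + (p ^ m - 1) / e)
        ∈ Ideal.span ({X 0 ^ p ^ m, X 1 ^ p ^ m} : Set (MvPolynomial (Fin 2) (ZMod p))))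
    ∧ (∑ k ∈ Finset.range m,
          ((X 1 : MvPolynomial (Fin 2) (ZMod p)) ^ e) ^ (1 + (p ^ m - p ^ (m - k)) / e) *
            (X 0 ^ p - X 0 * X 1 ^ (p - 1)) ^ p ^ (m - k - 1)
        ∈ Ideal.span ({X 0 ^ p ^ m, X 1 ^ p ^ m} : Set (MvPolynomial (Fin 2) (ZMod p))))
    ∧ (((X 0 : MvPolynomial (Fin 2) (ZMod p)) ^ p - X 0 * X 1 ^ (p - 1)) ^ (2 * p ^ (m - 1))
        ∈ Ideal.span ({X 0 ^ p ^ m, X 1 ^ p ^ m} : Set (MvPolynomial (Fin 2) (ZMod p)))) := by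
  have hp : p.Prime := Fact.out
  have hp2 : 2 ≤ p := hp.two_le
  set I : Ideal (MvPolynomial (Fin 2) (ZMod p)) :=
    Ideal.span ({X 0 ^ p ^ m, X 1 ^ p ^ m} : Set (MvPolynomial (Fin 2) (ZMod p))) with hI
  have hX0 : (X 0 : MvPolynomial (Fin 2) (ZMod p)) ^ p ^ m ∈ I :=
    Ideal.subset_span (by simp)
  have hX1 : (X 1 : MvPolynomial (Fin 2) (ZMod p)) ^ p ^ m ∈ I :=
    Ideal.subset_span (by simp)
  -- divisibility facts
  have hdvd : ∀ j : ℕ, e ∣ p ^ m - p ^ j := by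
    intro j
    rcases le_or_gt j m with h | h
    · have h2 : e ∣ p ^ (m - j) - 1 := he.trans (by
        simpa using Nat.sub_dvd_pow_sub_pow p 1 (m - j))
      have h3 : p ^ m - p ^ j = p ^ j * (p ^ (m - j) - 1) := by
        rw [Nat.mul_sub, mul_one, ← pow_add, Nat.add_sub_cancel' h]
      rw [h3]
      exact Dvd.dvd.mul_left h2 _
    · have : p ^ m ≤ p ^ j := Nat.pow_le_pow_right hp.pos h.le
      simp [Nat.sub_eq_zero_of_le this]
  have hpm1 : 1 ≤ p ^ m := Nat.one_le_pow _ _ hp.pos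
  have he1 : e ∣ p ^ m - 1 := he.trans (by simpa using Nat.sub_dvd_pow_sub_pow p 1 m)
  refine ⟨?_, ?_, ?_⟩
  · -- h0
    have hexp : e * (1 + (p ^ m - 1) / e) = p ^ m + (e - 1) := by
      rw [Nat.mul_add, Nat.mul_one, Nat.mul_div_cancel' he1]
      omega
    rw [← pow_mul, hexp, pow_add]
    exact I.mul_mem_right _ hX1
  · -- h1 : telescoping sum
    have key : ∀ k ∈ Finset.range m,
        ((X 1 : MvPolynomial (Fin 2) (ZMod p)) ^ e) ^ (1 + (p ^ m - p ^ (m - k)) / e) *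
            (X 0 ^ p - X 0 * X 1 ^ (p - 1)) ^ p ^ (m - k - 1)
          = (fun k => (X 0 : MvPolynomial (Fin 2) (ZMod p)) ^ p ^ (m - k) *
              X 1 ^ (e + (p ^ m - p ^ (m - k)))) k
            - (fun k => (X 0 : MvPolynomial (Fin 2) (ZMod p)) ^ p ^ (m - k) *
              X 1 ^ (e + (p ^ m - p ^ (m - k)))) (k + 1) := by
      intro k hk
      simp only [Finset.mem_range] at hk
      simp only
      set j := m - k - 1 with hjdef
      have hj1 : m - k = j + 1 := by omega
      have hj2 : m - (k + 1) = j := by omega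
      rw [hj1, hj2]
      have hfrob : ((X 0 : MvPolynomial (Fin 2) (ZMod p)) ^ p - X 0 * X 1 ^ (p - 1)) ^ p ^ j
          = X 0 ^ p ^ (j + 1) - X 0 ^ p ^ j * X 1 ^ ((p - 1) * p ^ j) := by
        rw [sub_pow_char_pow, mul_pow, ← pow_mul, ← pow_mul, ← pow_succ']
      have hexp : e * (1 + (p ^ m - p ^ (j + 1)) / e) = e + (p ^ m - p ^ (j + 1)) := by
        rw [Nat.mul_add, Nat.mul_one, Nat.mul_div_cancel' (hdvd (j + 1))]
      have hle : p ^ (j + 1) ≤ p ^ m := Nat.pow_le_pow_right hp.pos (by omega)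
      have hle' : p ^ j ≤ p ^ (j + 1) := Nat.pow_le_pow_right hp.pos (by omega)
      have hexp2 : e + (p ^ m - p ^ (j + 1)) + (p - 1) * p ^ j = e + (p ^ m - p ^ j) := by
        have h1 : (p - 1) * p ^ j = p ^ (j + 1) - p ^ j := by
          rw [Nat.sub_one_mul, ← pow_succ']
        omega
      rw [← pow_mul, hexp, hfrob, mul_sub]
      rw [show X 1 ^ (e + (p ^ m - p ^ (j + 1))) *
            ((X 0 : MvPolynomial (Fin 2) (ZMod p)) ^ p ^ j * X 1 ^ ((p - 1) * p ^ j))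
          = X 0 ^ p ^ j * X 1 ^ (e + (p ^ m - p ^ (j + 1)) + (p - 1) * p ^ j) by
        rw [pow_add]; ring]
      rw [hexp2]
      ring
    rw [Finset.sum_congr rfl key, Finset.sum_range_sub']
    simp only [Nat.sub_zero, Nat.sub_self, pow_zero, pow_one, add_zero]
    refine I.sub_mem (I.mul_mem_right _ hX0) ?_
    have hE : e + (p ^ m - 1) = p ^ m + (e - 1) := by omega
    rw [hE, pow_add]
    exact I.mul_mem_left _ (I.mul_mem_right _ hX1)
  · -- h2
    have hm1 : m - 1 + 1 = m := by omega
    have hfrob : ((X 0 : MvPolynomial (Fin 2) (ZMod p)) ^ p - X 0 * X 1 ^ (p - 1)) ^ p ^ (m - 1)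
        = X 0 ^ p ^ m - X 0 ^ p ^ (m - 1) * X 1 ^ ((p - 1) * p ^ (m - 1)) := by
      rw [sub_pow_char_pow, mul_pow, ← pow_mul, ← pow_mul, ← pow_succ', hm1]
    rw [mul_comm 2, pow_mul, hfrob]
    have hsq : ((X 0 : MvPolynomial (Fin 2) (ZMod p)) ^ p ^ m -
          X 0 ^ p ^ (m - 1) * X 1 ^ ((p - 1) * p ^ (m - 1))) ^ 2
        = X 0 ^ p ^ m *
            (X 0 ^ p ^ m - 2 * (X 0 ^ p ^ (m - 1) * X 1 ^ ((p - 1) * p ^ (m - 1))))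
          + (X 0 ^ p ^ (m - 1) * X 1 ^ ((p - 1) * p ^ (m - 1))) ^ 2 := by ring
    rw [hsq]
    refine I.add_mem (I.mul_mem_right _ hX0) ?_
    have hbig : p ^ m ≤ 2 * ((p - 1) * p ^ (m - 1)) := by
      have h1 : p ^ m = p * p ^ (m - 1) := by rw [← pow_succ', hm1]
      have h4 := Nat.mul_le_mul_right (p ^ (m - 1)) (show p ≤ 2 * (p - 1) by omega)
      rw [h1, ← mul_assoc]
      exact h4
    obtain ⟨d, hd⟩ : ∃ d, 2 * ((p - 1) * p ^ (m - 1)) = p ^ m + d :=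
      ⟨_, (Nat.add_sub_cancel' hbig).symm⟩
    have heq : ((X 0 : MvPolynomial (Fin 2) (ZMod p)) ^ p ^ (m - 1) *
          X 1 ^ ((p - 1) * p ^ (m - 1))) ^ 2
        = X 1 ^ p ^ m * ((X 0 ^ p ^ (m - 1)) ^ 2 * X 1 ^ d) := by
      have h3 : (p - 1) * p ^ (m - 1) * 2 = p ^ m + d := by omega
      rw [mul_pow, ← pow_mul, ← pow_mul, h3, pow_add]
      ring
    rw [heq]
    exact I.mul_mem_right _ hX1
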